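/- arXiv:1311.2749 — 5 statements merged into one kernel-verified Lean document; each statement's English description precedes it below -/
import Mathlib

section
/- Let G be a graph on n vertices, and let Q, X ⊆ V(G) be disjoint sets such that Q is an independent set of G. Suppose G − X admits a proper 3-coloring φ such that for every vertex v ∈ Q, all neighbors of v in G − X receive the same color under φ. Then G has an independent set of size at least (n − |X| + |Q|)/3. -/
open Set

/-- A set of vertices is independent: no two of its vertices are adjacent. -/
def SimpleGraph.IsIndep {V : Type} (G : SimpleGraph V) (s : Set V) : Prop :=
  ∀ ⦃u⦄, u ∈ s → ∀ ⦃v⦄, v ∈ s → ¬ G.Adj u v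

/-- A topological plane drawing of a simple graph: an injective placement of the
vertices in the plane together with pairwise internally disjoint arcs for the edges. -/
structure PlaneDrawing {V : Type} (G : SimpleGraph V) where
  pos : V → ℝ × ℝ
  pos_inj : Function.Injective pos
  arc : ∀ ⦃u v : V⦄, G.Adj u v → Path (pos u) (pos v)
  arc_symm : ∀ ⦃u v : V⦄ (h : G.Adj u v), arc h.symm = (arc h).symm
  arc_inj : ∀ ⦃u v : V⦄ (h : G.Adj u v), Function.Injective ⇑(arc h)
  arc_vertex : ∀ ⦃u v : V⦄ (h : G.Adj u v) (w : V),
      pos w ∈ Set.range ⇑(arc h) → w = u ∨ w = v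
  arc_arc : ∀ ⦃u v x y : V⦄ (h : G.Adj u v) (h' : G.Adj x y), s(u, v) ≠ s(x, y) →
      Set.range ⇑(arc h) ∩ Set.range ⇑(arc h') ⊆ ({pos u, pos v} ∩ {pos x, pos y} : Set (ℝ × ℝ))

/-- A graph is planar if it admits a plane drawing. -/
def SimpleGraph.IsPlanar {V : Type} (G : SimpleGraph V) : Prop :=
  Nonempty (PlaneDrawing G)

namespace PlaneDrawing

variable {V : Type} {G : SimpleGraph V} (D : PlaneDrawing G)

/-- The point set of the drawing. -/
def image : Set (ℝ × ℝ) :=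
  Set.range D.pos ∪ ⋃ (u : V) (v : V) (h : G.Adj u v), Set.range ⇑(D.arc h)

/-- Faces of the drawing: connected components of the complement of its image. -/
def IsFace (f : Set (ℝ × ℝ)) : Prop :=
  ∃ x ∉ D.image, f = connectedComponentIn D.imageᶜ x

/-- `f` is a 4-face of the drawing with boundary cycle `u v w x`. -/
def IsFace4 (f : Set (ℝ × ℝ)) (u v w x : V) : Prop :=
  D.IsFace f ∧ u ≠ w ∧ v ≠ x ∧
    ∃ (h1 : G.Adj u v) (h2 : G.Adj v w) (h3 : G.Adj w x) (h4 : G.Adj x u),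
      frontier f =
        Set.range ⇑(D.arc h1) ∪ Set.range ⇑(D.arc h2) ∪
        Set.range ⇑(D.arc h3) ∪ Set.range ⇑(D.arc h4)

/-- The closed curve in the plane formed by the arcs of a 4-cycle `a b c d`. -/
def cycleImage4 {a b c d : V} (h1 : G.Adj a b) (h2 : G.Adj b c)
    (h3 : G.Adj c d) (h4 : G.Adj d a) : Set (ℝ × ℝ) :=
  Set.range ⇑(D.arc h1) ∪ Set.range ⇑(D.arc h2) ∪ Set.range ⇑(D.arc h3) ∪ Set.range ⇑(D.arc h4)

/-- The drawing has a separating 4-cycle: a 4-cycle whose curve has two vertices of the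
graph in different connected components of its complement (i.e. both the open interior
and the exterior of the curve contain a vertex). -/
def HasSeparating4Cycle : Prop :=
  ∃ (a b c d : V) (h1 : G.Adj a b) (h2 : G.Adj b c) (h3 : G.Adj c d) (h4 : G.Adj d a),
    a ≠ c ∧ b ≠ d ∧
    ∃ p q : V, D.pos p ∉ D.cycleImage4 h1 h2 h3 h4 ∧ D.pos q ∉ D.cycleImage4 h1 h2 h3 h4 ∧
      connectedComponentIn (D.cycleImage4 h1 h2 h3 h4)ᶜ (D.pos p) ≠
      connectedComponentIn (D.cycleImage4 h1 h2 h3 h4)ᶜ (D.pos q)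

/-- The point set of the induced drawing of a subgraph. -/
def subImage (H : G.Subgraph) : Set (ℝ × ℝ) :=
  D.pos '' H.verts ∪ ⋃ (u : V) (v : V) (h : H.Adj u v), Set.range ⇑(D.arc h.adj_sub)

/-- Faces of the induced drawing of a subgraph. -/
def IsFaceOfSub (H : G.Subgraph) (f : Set (ℝ × ℝ)) : Prop :=
  ∃ x ∉ D.subImage H, f = connectedComponentIn (D.subImage H)ᶜ x

/-- A face of the induced drawing of a subgraph has length 4. -/
def SubFaceLen4 (H : G.Subgraph) (f : Set (ℝ × ℝ)) : Prop :=
  ∃ (u v w x : V) (h1 : H.Adj u v) (h2 : H.Adj v w) (h3 : H.Adj w x) (h4 : H.Adj x u),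
    u ≠ w ∧ v ≠ x ∧
    frontier f =
      Set.range ⇑(D.arc h1.adj_sub) ∪ Set.range ⇑(D.arc h2.adj_sub) ∪
      Set.range ⇑(D.arc h3.adj_sub) ∪ Set.range ⇑(D.arc h4.adj_sub)

/-- The induced drawing of the subgraph `H` has a separating 4-cycle. -/
def SubHasSeparating4Cycle (H : G.Subgraph) : Prop :=
  ∃ (a b c d : V) (h1 : H.Adj a b) (h2 : H.Adj b c) (h3 : H.Adj c d) (h4 : H.Adj d a),
    a ≠ c ∧ b ≠ d ∧
    ∃ p ∈ H.verts, ∃ q ∈ H.verts,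
      D.pos p ∉ D.cycleImage4 h1.adj_sub h2.adj_sub h3.adj_sub h4.adj_sub ∧
      D.pos q ∉ D.cycleImage4 h1.adj_sub h2.adj_sub h3.adj_sub h4.adj_sub ∧
      connectedComponentIn (D.cycleImage4 h1.adj_sub h2.adj_sub h3.adj_sub h4.adj_sub)ᶜ (D.pos p) ≠
      connectedComponentIn (D.cycleImage4 h1.adj_sub h2.adj_sub h3.adj_sub h4.adj_sub)ᶜ (D.pos q)

/-- A subgraph `H` of a plane graph is 4-swept if it has no separating 4-cycle and every
face of `H` which is not a face of the whole drawing has length 4. -/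
def FourSwept (H : G.Subgraph) : Prop :=
  ¬ D.SubHasSeparating4Cycle H ∧
    ∀ f : Set (ℝ × ℝ), D.IsFaceOfSub H f → ¬ D.IsFace f → D.SubFaceLen4 H f

end PlaneDrawing

/-- `G` has a tree decomposition of width at most `w`. -/
def HasTreewidthLE {V : Type} (G : SimpleGraph V) (w : ℕ) : Prop :=
  ∃ (ι : Type) (T : SimpleGraph ι) (B : ι → Finset V),
    T.Connected ∧ T.IsAcyclic ∧
    (∀ v : V, ∃ i, v ∈ B i) ∧
    (∀ u v : V, G.Adj u v → ∃ i, u ∈ B i ∧ v ∈ B i) ∧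
    (∀ v : V, (T.induce {i | v ∈ B i}).Preconnected) ∧
    (∀ i, (B i).card ≤ w + 1)

/-- If `Q` is independent, `Q` and `X` are disjoint, and `G - X` has a proper 3-coloring in
which the neighborhood of every vertex of `Q` is monochromatic, then `G` has an independent
set of size at least `(n - |X| + |Q|)/3`. -/
theorem stmt1 {V : Type} [Fintype V] (G : SimpleGraph V) (n : ℕ) (hn : Fintype.card V = n)
    (Q X : Finset V) (hdisj : Disjoint Q X) (hQ : G.IsIndep ↑Q)
    (φ : V → Fin 3)
    (hproper : ∀ u v : V, u ∉ X → v ∉ X → G.Adj u v → φ u ≠ φ v)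
    (hmono : ∀ v ∈ Q, ∀ u w : V, u ∉ X → w ∉ X → G.Adj v u → G.Adj v w → φ u = φ w) :
    ∃ I : Finset V, G.IsIndep ↑I ∧ ((n : ℝ) - X.card + Q.card) / 3 ≤ I.card := by
  classical
  -- a "forbidden" color for each vertex: the common color of its neighbors if v ∈ Q
  have hchoice : ∀ v : V, ∃ cv : Fin 3, (v ∉ X → cv ≠ φ v) ∧
      (v ∈ Q → ∀ w, w ∉ X → G.Adj v w → φ w = cv) := by
    intro v
    by_cases h : ∃ u, u ∉ X ∧ G.Adj v u
    · obtain ⟨u, hu, huv⟩ := h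
      refine ⟨φ u, fun hv => hproper u v hu hv huv.symm, fun hvQ w hw hvw => ?_⟩
      exact (hmono v hvQ u w hu hw huv hvw).symm
    · refine ⟨if φ v = 0 then 1 else 0, fun _ => ?_, fun _ w hw hvw => absurd ⟨w, hw, hvw⟩ h⟩
      split <;> simp_all [eq_comm]
  choose c hcne hQc using hchoice
  set p : Fin 3 → V → Prop := fun i v => v ∉ X ∧ (φ v = i ∨ (v ∈ Q ∧ c v ≠ i)) with hp
  set S : Fin 3 → Finset V := fun i => Finset.univ.filter (p i) with hS
  have hQX : ∀ v ∈ Q, v ∉ X := fun v hv hvX =>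
    (Finset.disjoint_left.mp hdisj hv) hvX
  -- each S i is independent
  have hind : ∀ i, G.IsIndep ↑(S i) := by
    intro i u hu v hv huv
    simp only [hS, Finset.coe_filter, Set.mem_setOf_eq, hp] at hu hv
    obtain ⟨huX, hu'⟩ := hu.2
    obtain ⟨hvX, hv'⟩ := hv.2
    rcases hu' with hu1 | ⟨huQ, hucne⟩ <;> rcases hv' with hv1 | ⟨hvQ, hvcne⟩
    · exact hproper u v huX hvX huv (hu1.trans hv1.symm)
    · exact hvcne ((hQc v hvQ u huX huv.symm) ▸ hu1)
    · exact hucne ((hQc u huQ v hvX huv) ▸ hv1)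
    · exact hQ huQ hvQ huv
  -- count: each v ∉ X ∪ Q in one class, each v ∈ Q in two classes
  have hcount : ∀ v : V, (Finset.univ.filter (fun i : Fin 3 => p i v)).card
      = (if v ∈ X then 0 else 1) + (if v ∈ Q then 1 else 0) := by
    intro v
    by_cases hvX : v ∈ X
    · have hvQ : v ∉ Q := fun h => hQX v h hvX
      simp [hp, hvX, hvQ]
    · by_cases hvQ : v ∈ Q
      · have hne := hcne v hvX
        have : (Finset.univ.filter (fun i : Fin 3 => p i v)) = Finset.univ.erase (c v) := by
          ext i
          simp only [hp, Finset.mem_filter, Finset.mem_univ, true_and, Finset.mem_erase]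
          constructor
          · rintro ⟨-, h | ⟨-, h⟩⟩
            · exact ⟨fun hh => hne (hh ▸ h.symm), trivial⟩
            · exact ⟨Ne.symm h, trivial⟩
          · rintro ⟨h, -⟩
            exact ⟨hvX, Or.inr ⟨hvQ, Ne.symm h⟩⟩
        rw [this]
        simp [hvX, hvQ, Finset.card_erase_of_mem]
      · have : (Finset.univ.filter (fun i : Fin 3 => p i v)) = {φ v} := by
          ext i
          simp only [hp, Finset.mem_filter, Finset.mem_univ, true_and, Finset.mem_singleton]
          constructor
          · rintro ⟨-, h | ⟨h, -⟩⟩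
            · exact h.symm
            · exact absurd h hvQ
          · rintro rfl; exact ⟨hvX, Or.inl rfl⟩
        rw [this]
        simp [hvX, hvQ]
  have hsum : (Fintype.card V - X.card) + Q.card = ∑ i : Fin 3, (S i).card := by
    have : ∑ i : Fin 3, (S i).card = ∑ v : V, (Finset.univ.filter (fun i : Fin 3 => p i v)).card := by
      simp only [hS, Finset.card_filter]
      rw [Finset.sum_comm]
    rw [this]
    simp only [hcount, Finset.sum_add_distrib]
    congr 1
    · have h1 : ∑ x : V, (if x ∈ X then 0 else 1)
          = (Finset.univ.filter (fun x : V => x ∉ X)).card := by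
        rw [Finset.card_filter]
        exact Finset.sum_congr rfl (fun x _ => by by_cases hx : x ∈ X <;> simp [hx])
      rw [h1, Finset.filter_not, Finset.filter_mem_eq_inter, Finset.univ_inter,
        Finset.card_sdiff_of_subset (Finset.subset_univ X), Finset.card_univ]
    · rw [← Finset.card_filter]
      congr 1
      simp [Finset.filter_mem_eq_inter]
  -- pick the largest class
  have hXle : X.card ≤ Fintype.card V := Finset.card_le_univ X
  have hreal : ((n : ℝ) - X.card + Q.card) ≤ ∑ i : Fin 3, ((S i).card : ℝ) := by
    have h2 : ((Fintype.card V - X.card + Q.card : ℕ) : ℝ) = ∑ i : Fin 3, ((S i).card : ℝ) := by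
      rw [hsum]; push_cast; ring
    rw [Nat.cast_add, Nat.cast_sub hXle, hn] at h2
    linarith
  have hex : ∃ i : Fin 3, ((n : ℝ) - X.card + Q.card) / 3 ≤ (S i).card := by
    by_contra hcon
    push_neg at hcon
    have : ∑ i : Fin 3, ((S i).card : ℝ) < ∑ i : Fin 3, ((n : ℝ) - X.card + Q.card) / 3 := by
      apply Finset.sum_lt_sum_of_nonempty (by simp) (fun i _ => hcon i)
    simp only [Finset.sum_const, Finset.card_univ, Fintype.card_fin, nsmul_eq_mul] at this
    linarith
  obtain ⟨i, hi⟩ := hex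
  exact ⟨S i, hind i, hi⟩
end

section
/- Let c, t ≥ 1 be integers and set K₀ = c^{2c} (2c+2)^{c+1} t^c. Let G be a bipartite graph with parts S and Z in which every vertex of S has degree at most c. Then there exist sets Q ⊆ S and X ⊆ Z such that |Q| ≥ |S|/K₀, |X| ≤ |Q|/t, and for all distinct u, v ∈ Q, every common neighbor of u and v belongs to X. -/
open Set

section AuxStmt2
open Finset

lemma key_lemma {V : Type} [DecidableEq V] :
    ∀ (i s : ℕ), 1 ≤ s → ∀ (S Z : Finset V) (N : V → Finset V),
    (∀ v ∈ S, N v ⊆ Z) → (∀ v ∈ S, (N v).card ≤ i) →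
    ∃ Q X : Finset V, Q ⊆ S ∧ X ⊆ Z ∧
      S.card ≤ 4 ^ i * (Nat.factorial i) ^ 2 * s ^ i * Q.card ∧
      s * X.card ≤ i * Q.card ∧
      ∀ u ∈ Q, ∀ v ∈ Q, u ≠ v → N u ∩ N v ⊆ X := by
  intro i
  induction i with
  | zero =>
    intro s hs S Z N hNZ hNc
    refine ⟨S, ∅, subset_rfl, Finset.empty_subset _, by simp, by simp, ?_⟩
    intro u hu v hv huv
    have : N u = ∅ := card_eq_zero.mp (Nat.le_zero.mp (hNc u hu))
    simp [this]
  | succ i ih =>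
    intro s hs S Z N hNZ hNc
    classical
    set M' : ℕ := 4 ^ i * (Nat.factorial i) ^ 2 * s ^ i with hM'
    have hM'pos : 0 < M' := by positivity
    set D : ℕ := 2 * (i + 1) * s * M' with hD
    have hDpos : 0 < D := by positivity
    set H : Finset V := Z.filter (fun z => D ≤ (S.filter (fun v => z ∈ N v)).card) with hH
    set S₁ : Finset V := S.filter (fun v => (N v ∩ H).Nonempty) with hS₁
    set S₀ : Finset V := S.filter (fun v => ¬ (N v ∩ H).Nonempty) with hS₀
    have hMsucc : 4 ^ (i + 1) * (Nat.factorial (i + 1)) ^ 2 * s ^ (i + 1)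
        = 2 * (i + 1) * D := by
      rw [hD, hM', Nat.factorial_succ, pow_succ, pow_succ]
      ring
    -- double counting: heavy vertices are few
    have hcount : D * H.card ≤ (i + 1) * S.card := by
      calc D * H.card = ∑ _z ∈ H, D := by rw [sum_const, smul_eq_mul, mul_comm]
        _ ≤ ∑ z ∈ H, (S.filter (fun v => z ∈ N v)).card :=
            sum_le_sum (fun z hz => (mem_filter.mp hz).2)
        _ = ∑ z ∈ H, ∑ v ∈ S, if z ∈ N v then 1 else 0 :=
            Finset.sum_congr rfl (fun z _ => Finset.card_filter _ _)
        _ = ∑ v ∈ S, ∑ z ∈ H, if z ∈ N v then 1 else 0 := Finset.sum_comm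
        _ = ∑ v ∈ S, (H.filter (fun z => z ∈ N v)).card :=
            Finset.sum_congr rfl (fun v _ => (Finset.card_filter _ _).symm)
        _ ≤ ∑ _v ∈ S, (i + 1) :=
            sum_le_sum (fun v hv =>
              le_trans (card_le_card (fun z hz => (mem_filter.mp hz).2)) (hNc v hv))
        _ = (i + 1) * S.card := by rw [sum_const, smul_eq_mul, mul_comm]
    have hsplit : S₀.card + S₁.card = S.card := by
      rw [hS₀, hS₁, add_comm]
      exact card_filter_add_card_filter_not _
    by_cases hcase : S.card ≤ 2 * S₁.card
    · -- Case B : recurse on S₁ with neighborhoods minus heavy set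
      obtain ⟨Q, X', hQS₁, hX'Z, hcard, hX'card, hcn⟩ :=
        ih s hs S₁ Z (fun v => N v \ H)
          (fun v hv => (Finset.sdiff_subset).trans (hNZ v (mem_of_mem_filter v hv)))
          (by
            intro v hv
            show (N v \ H).card ≤ i
            have hne : (N v ∩ H).Nonempty := (mem_filter.mp hv).2
            have h1 : 1 ≤ (N v ∩ H).card := card_pos.mpr hne
            have h2 := card_sdiff_add_card_inter (N v) H
            have h3 := hNc v (mem_of_mem_filter v hv)
            omega)
      refine ⟨Q, X' ∪ H, hQS₁.trans (filter_subset _ _),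
        Finset.union_subset hX'Z (filter_subset _ _), ?_, ?_, ?_⟩
      · -- size of S
        have h1 : S.card ≤ 2 * (M' * Q.card) := le_trans hcase (by
          exact Nat.mul_le_mul_left 2 hcard)
        rw [hMsucc]
        have h2 : 2 * M' ≤ 2 * (i + 1) * D := by
          have hfac : 0 < 2 * (i + 1) * s := by positivity
          have hDM : M' ≤ D := by
            calc M' = 1 * M' := (one_mul _).symm
              _ ≤ (2 * (i + 1) * s) * M' := Nat.mul_le_mul_right _ hfac
          exact Nat.mul_le_mul (by omega) hDM
        calc S.card ≤ 2 * M' * Q.card := by rw [mul_assoc]; exact h1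
          _ ≤ 2 * (i + 1) * D * Q.card := Nat.mul_le_mul_right _ h2
      · -- size of X
        have hsH : s * H.card ≤ Q.card := by
          have h1 : D * (s * H.card) ≤ D * Q.card := by
            calc D * (s * H.card) = s * (D * H.card) := by ring
              _ ≤ s * ((i + 1) * S.card) := Nat.mul_le_mul_left s hcount
              _ ≤ s * ((i + 1) * (2 * S₁.card)) := by
                  exact Nat.mul_le_mul_left s (Nat.mul_le_mul_left _ hcase)
              _ ≤ s * ((i + 1) * (2 * (M' * Q.card))) := by
                  exact Nat.mul_le_mul_left s (Nat.mul_le_mul_left _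
                    (Nat.mul_le_mul_left 2 hcard))
              _ = D * Q.card := by rw [hD]; ring
          exact Nat.le_of_mul_le_mul_left h1 hDpos
        calc s * (X' ∪ H).card ≤ s * (X'.card + H.card) :=
              Nat.mul_le_mul_left s (card_union_le _ _)
          _ = s * X'.card + s * H.card := by ring
          _ ≤ i * Q.card + Q.card := Nat.add_le_add hX'card hsH
          _ = (i + 1) * Q.card := by ring
      · -- common neighbors
        intro u hu v hv huv w hw
        rw [Finset.mem_inter] at hw
        by_cases hwH : w ∈ H
        · exact Finset.mem_union_right _ hwH
        · refine Finset.mem_union_left _ (hcn u hu v hv huv ?_)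
          rw [Finset.mem_inter, Finset.mem_sdiff, Finset.mem_sdiff]
          exact ⟨⟨hw.1, hwH⟩, ⟨hw.2, hwH⟩⟩
    · -- Case A : greedy on S₀
      have hS0 : S.card ≤ 2 * S₀.card := by omega
      set P : Finset (Finset V) :=
        S₀.powerset.filter (fun Q => ∀ u ∈ Q, ∀ v ∈ Q, u ≠ v → N u ∩ N v = ∅) with hP
      have hPne : P.Nonempty := ⟨∅, by simp [hP]⟩
      obtain ⟨Q, hQP, hQmax⟩ := P.exists_max_image Finset.card hPne
      have hQsub : Q ⊆ S₀ := Finset.mem_powerset.mp (mem_filter.mp hQP).1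
      have hQprop : ∀ u ∈ Q, ∀ v ∈ Q, u ≠ v → N u ∩ N v = ∅ := (mem_filter.mp hQP).2
      -- every vertex of S₀ is in Q or shares a neighbor with some member of Q
      have hcover : ∀ v ∈ S₀, ∃ q ∈ Q, v = q ∨ (N v ∩ N q).Nonempty := by
        intro v hv
        by_contra hcon
        push_neg at hcon
        have hvQ : v ∉ Q := fun h => (hcon v h).1 rfl
        have hins : insert v Q ∈ P := by
          rw [hP, mem_filter, Finset.mem_powerset]
          refine ⟨Finset.insert_subset hv hQsub, ?_⟩
          intro a ha b hb hab
          rcases Finset.mem_insert.mp ha with rfl | haQ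
          · rcases Finset.mem_insert.mp hb with rfl | hbQ
            · exact absurd rfl hab
            · exact (hcon b hbQ).2
          · rcases Finset.mem_insert.mp hb with rfl | hbQ
            · rw [Finset.inter_comm]
              exact (hcon a haQ).2
            · exact hQprop a haQ b hbQ hab
        have := hQmax _ hins
        rw [Finset.card_insert_of_notMem hvQ] at this
        omega
      -- counting: each q covers at most (i+1)*D vertices
      have hS0le : S₀.card ≤ ((i + 1) * D) * Q.card := by
        have hsub : S₀ ⊆ Q.biUnion
            (fun q => insert q (S₀.filter (fun v => (N v ∩ N q).Nonempty))) := by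
          intro v hv
          obtain ⟨q, hq, hcase2⟩ := hcover v hv
          refine Finset.mem_biUnion.mpr ⟨q, hq, ?_⟩
          rcases hcase2 with rfl | hne
          · exact Finset.mem_insert_self _ _
          · exact Finset.mem_insert_of_mem (mem_filter.mpr ⟨hv, hne⟩)
        have hper : ∀ q ∈ Q,
            (insert q (S₀.filter (fun v => (N v ∩ N q).Nonempty))).card ≤ (i + 1) * D := by
          intro q hq
          have hqS₀ : q ∈ S₀ := hQsub hq
          have hqH : ∀ z ∈ N q, z ∉ H := by
            intro z hz hzH
            exact (mem_filter.mp hqS₀).2 ⟨z, mem_inter.mpr ⟨hz, hzH⟩⟩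
          have hlight : ∀ z ∈ N q, (S.filter (fun v => z ∈ N v)).card ≤ D - 1 := by
            intro z hz
            have hzZ : z ∈ Z := hNZ q (mem_of_mem_filter q hqS₀) hz
            have : ¬ D ≤ (S.filter (fun v => z ∈ N v)).card := by
              intro hDle
              exact hqH z hz (mem_filter.mpr ⟨hzZ, hDle⟩)
            omega
          have hfsub : S₀.filter (fun v => (N v ∩ N q).Nonempty)
              ⊆ (N q).biUnion (fun z => S.filter (fun v => z ∈ N v)) := by
            intro v hv
            obtain ⟨z, hz⟩ := (mem_filter.mp hv).2
            rw [Finset.mem_inter] at hz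
            have hvS : v ∈ S := mem_of_mem_filter v (mem_of_mem_filter v hv)
            exact Finset.mem_biUnion.mpr ⟨z, hz.2, mem_filter.mpr ⟨hvS, hz.1⟩⟩
          have hD1 : D - 1 + 1 = D := Nat.succ_pred_eq_of_pos hDpos
          calc (insert q (S₀.filter (fun v => (N v ∩ N q).Nonempty))).card
              ≤ (S₀.filter (fun v => (N v ∩ N q).Nonempty)).card + 1 := Finset.card_insert_le _ _
            _ ≤ ((N q).biUnion (fun z => S.filter (fun v => z ∈ N v))).card + 1 :=
                Nat.add_le_add_right (Finset.card_le_card hfsub) 1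
            _ ≤ (∑ z ∈ N q, (S.filter (fun v => z ∈ N v)).card) + 1 :=
                Nat.add_le_add_right card_biUnion_le 1
            _ ≤ (∑ _z ∈ N q, (D - 1)) + 1 := Nat.add_le_add_right (sum_le_sum hlight) 1
            _ = (N q).card * (D - 1) + 1 := by rw [sum_const, smul_eq_mul]
            _ ≤ (i + 1) * (D - 1) + 1 :=
                Nat.add_le_add_right (Nat.mul_le_mul_right _ (hNc q (mem_of_mem_filter q hqS₀))) 1
            _ ≤ (i + 1) * (D - 1) + (i + 1) * 1 := Nat.add_le_add_left (by omega) _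
            _ = (i + 1) * (D - 1 + 1) := by ring
            _ = (i + 1) * D := by rw [hD1]
        calc S₀.card ≤ ((Q.biUnion (fun q => insert q
              (S₀.filter (fun v => (N v ∩ N q).Nonempty))))).card := card_le_card hsub
          _ ≤ ∑ q ∈ Q, (insert q (S₀.filter (fun v => (N v ∩ N q).Nonempty))).card :=
              card_biUnion_le
          _ ≤ ∑ _q ∈ Q, (i + 1) * D := sum_le_sum hper
          _ = ((i + 1) * D) * Q.card := by rw [sum_const, smul_eq_mul, mul_comm]
      refine ⟨Q, ∅, hQsub.trans (filter_subset _ _), Finset.empty_subset _, ?_, by simp, ?_⟩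
      · rw [hMsucc]
        calc S.card ≤ 2 * S₀.card := hS0
          _ ≤ 2 * (((i + 1) * D) * Q.card) := Nat.mul_le_mul_left 2 hS0le
          _ = 2 * (i + 1) * D * Q.card := by ring
      · intro u hu v hv huv
        rw [hQprop u hu v hv huv]

lemma pow_mul_add_le (c : ℕ) : ∀ n : ℕ, c ^ n * (c + n) ≤ (c + 1) ^ n * c := by
  intro n
  induction n with
  | zero => simp
  | succ n ih =>
    have h2 : c ^ n ≤ (c + 1) ^ n := Nat.pow_le_pow_left (by omega) n
    calc c ^ (n + 1) * (c + (n + 1)) = c * (c ^ n * (c + n)) + c * c ^ n := by ring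
      _ ≤ c * ((c + 1) ^ n * c) + c * c ^ n := Nat.add_le_add_right (Nat.mul_le_mul_left c ih) _
      _ ≤ c * ((c + 1) ^ n * c) + c * (c + 1) ^ n :=
          Nat.add_le_add_left (Nat.mul_le_mul_left c h2) _
      _ = (c + 1) ^ (n + 1) * c := by ring

lemma two_mul_pow_le (c : ℕ) (hc : 1 ≤ c) : 2 * c ^ c ≤ (c + 1) ^ c := by
  have h := pow_mul_add_le c c
  have h1 : c * (2 * c ^ c) ≤ c * ((c + 1) ^ c) := by
    calc c * (2 * c ^ c) = c ^ c * (c + c) := by ring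
      _ ≤ (c + 1) ^ c * c := h
      _ = c * (c + 1) ^ c := by ring
  exact Nat.le_of_mul_le_mul_left h1 (by omega)

lemma two_pow_fact_le : ∀ c : ℕ, 1 ≤ c → 2 ^ (c - 1) * c.factorial ≤ c ^ c := by
  intro c
  induction c with
  | zero => omega
  | succ c ih =>
    intro _
    rcases Nat.eq_zero_or_pos c with rfl | hc
    · simp
    have h1 : 2 ^ (c - 1) * c.factorial ≤ c ^ c := ih hc
    have h2 : c - 1 + 1 = c := by omega
    have h3 : 2 ^ (c + 1 - 1) * (c + 1).factorial
        = 2 * (2 ^ (c - 1) * c.factorial) * (c + 1) := by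
      rw [Nat.factorial_succ]
      have : c + 1 - 1 = c - 1 + 1 := by omega
      rw [this, pow_succ]
      ring
    calc 2 ^ (c + 1 - 1) * (c + 1).factorial
        = 2 * (2 ^ (c - 1) * c.factorial) * (c + 1) := h3
      _ ≤ 2 * c ^ c * (c + 1) := Nat.mul_le_mul_right _ (Nat.mul_le_mul_left 2 h1)
      _ ≤ (c + 1) ^ c * (c + 1) := Nat.mul_le_mul_right _ (two_mul_pow_le c hc)
      _ = (c + 1) ^ (c + 1) := by rw [pow_succ]

lemma const_ineq (c t : ℕ) (hc : 1 ≤ c) (ht : 1 ≤ t) :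
    4 ^ c * (Nat.factorial c) ^ 2 * (c * t) ^ c
      ≤ c ^ (2 * c) * (2 * c + 2) ^ (c + 1) * t ^ c := by
  obtain ⟨d, rfl⟩ : ∃ d, c = d + 1 := ⟨c - 1, by omega⟩
  set c := d + 1 with hcdef
  have hA : 4 ^ c * (Nat.factorial c) ^ 2 ≤ 4 * c ^ (2 * c) := by
    have h1 : 2 ^ (c - 1) * c.factorial ≤ c ^ c := two_pow_fact_le c hc
    have h4 : 4 ^ c = 4 * (2 ^ (c - 1)) ^ 2 := by
      have hd : c - 1 = d := by omega
      rw [hd, hcdef]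
      have : (4 : ℕ) = 2 ^ 2 := rfl
      rw [this, ← pow_mul, ← pow_mul, ← pow_add]
      congr 1
      omega
    calc 4 ^ c * (Nat.factorial c) ^ 2 = 4 * (2 ^ (c - 1) * c.factorial) ^ 2 := by
          rw [h4, mul_pow]; ring
      _ ≤ 4 * (c ^ c) ^ 2 := Nat.mul_le_mul_left 4 (Nat.pow_le_pow_left h1 2)
      _ = 4 * c ^ (2 * c) := by rw [← pow_mul]; ring_nf
  have hB : 4 * c ^ c ≤ (2 * c + 2) ^ (c + 1) := by
    have h1 : c ^ c ≤ (c + 1) ^ (c + 1) :=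
      le_trans (Nat.pow_le_pow_left (by omega) c) (Nat.pow_le_pow_right (by omega) (by omega))
    have h2 : (2 * c + 2) ^ (c + 1) = 2 ^ (c + 1) * (c + 1) ^ (c + 1) := by
      rw [← mul_pow]; ring_nf
    have h3 : 4 ≤ 2 ^ (c + 1) := by
      calc (4 : ℕ) = 2 ^ 2 := rfl
        _ ≤ 2 ^ (c + 1) := Nat.pow_le_pow_right (by norm_num) (by omega)
    rw [h2]
    exact Nat.mul_le_mul h3 h1
  calc 4 ^ c * (Nat.factorial c) ^ 2 * (c * t) ^ c
      = (4 ^ c * (Nat.factorial c) ^ 2 * c ^ c) * t ^ c := by rw [mul_pow]; ring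
    _ ≤ (4 * c ^ (2 * c) * c ^ c) * t ^ c :=
        Nat.mul_le_mul_right _ (Nat.mul_le_mul_right _ hA)
    _ = (c ^ (2 * c) * (4 * c ^ c)) * t ^ c := by ring
    _ ≤ (c ^ (2 * c) * (2 * c + 2) ^ (c + 1)) * t ^ c :=
        Nat.mul_le_mul_right _ (Nat.mul_le_mul_left _ hB)

end AuxStmt2

/-- In a bipartite graph with parts `S`, `Z` where every vertex of `S` has degree at most `c`,
there are `Q ⊆ S` and `X ⊆ Z` with `|Q| ≥ |S|/K₀`, `|X| ≤ |Q|/t`, and all common neighbors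
of distinct vertices of `Q` lying in `X`. -/
theorem stmt2 {V : Type} [Fintype V] [DecidableEq V] (G : SimpleGraph V) [DecidableRel G.Adj]
    (c t : ℕ) (hc : 1 ≤ c) (ht : 1 ≤ t)
    (K₀ : ℕ) (hK : K₀ = c ^ (2 * c) * (2 * c + 2) ^ (c + 1) * t ^ c)
    (S Z : Finset V) (hSZ : Disjoint S Z) (hparts : S ∪ Z = Finset.univ)
    (hbip : ∀ u v : V, G.Adj u v → (u ∈ S ∧ v ∈ Z) ∨ (u ∈ Z ∧ v ∈ S))
    (hdeg : ∀ v ∈ S, G.degree v ≤ c) :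
    ∃ Q X : Finset V, Q ⊆ S ∧ X ⊆ Z ∧
      (S.card : ℝ) / K₀ ≤ (Q.card : ℝ) ∧ (X.card : ℝ) ≤ (Q.card : ℝ) / t ∧
      ∀ u ∈ Q, ∀ v ∈ Q, u ≠ v → ∀ w : V, G.Adj u w → G.Adj v w → w ∈ X := by
  have hct : 1 ≤ c * t := Nat.one_le_iff_ne_zero.mpr (by positivity)
  obtain ⟨Q, X, hQS, hXZ, h1, h2, h3⟩ :=
    key_lemma c (c * t) hct S Z (fun v => G.neighborFinset v)
      (by
        intro v hv z hz
        have hadj : G.Adj v z := (SimpleGraph.mem_neighborFinset _ _ _).mp hz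
        rcases hbip v z hadj with ⟨_, hz2⟩ | ⟨hv2, _⟩
        · exact hz2
        · exact absurd hv2 (Finset.disjoint_left.mp hSZ hv))
      (by
        intro v hv
        rw [SimpleGraph.card_neighborFinset_eq_degree]
        exact hdeg v hv)
  have hK0pos : 0 < K₀ := by
    rw [hK]
    have h1 : 0 < c := hc
    have h2 : 0 < t := ht
    positivity
  refine ⟨Q, X, hQS, hXZ, ?_, ?_, ?_⟩
  · have hMK : 4 ^ c * (Nat.factorial c) ^ 2 * (c * t) ^ c ≤ K₀ := by
      rw [hK]; exact const_ineq c t hc ht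
    have hnat : S.card ≤ K₀ * Q.card := le_trans h1 (Nat.mul_le_mul_right _ hMK)
    rw [div_le_iff₀ (by exact_mod_cast hK0pos)]
    calc (S.card : ℝ) ≤ ((K₀ * Q.card : ℕ) : ℝ) := Nat.cast_le.mpr hnat
      _ = Q.card * K₀ := by push_cast; ring
  · have h2' : t * X.card ≤ Q.card := by
      have hcc : c * (t * X.card) ≤ c * Q.card := by
        calc c * (t * X.card) = (c * t) * X.card := by ring
          _ ≤ c * Q.card := h2
      exact Nat.le_of_mul_le_mul_left hcc (by omega)
    rw [le_div_iff₀ (by exact_mod_cast ht : (0:ℝ) < t)]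
    calc (X.card : ℝ) * t = ((t * X.card : ℕ) : ℝ) := by push_cast; ring
      _ ≤ Q.card := Nat.cast_le.mpr h2'
  · intro u hu v hv huv w hw1 hw2
    exact h3 u hu v hv huv (Finset.mem_inter.mpr
      ⟨(SimpleGraph.mem_neighborFinset _ _ _).mpr hw1,
       (SimpleGraph.mem_neighborFinset _ _ _).mpr hw2⟩)
end

section
/- If a graph G is a clique-sum of graphs G₁ and G₂, then the tree-width of G is at most the maximum of the tree-widths of G₁ and G₂. -/
open Set

namespace CliqueSumAux
open SimpleGraph

set_option linter.unusedVariables false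

variable {ι : Type}

/-- Path-closed set in a graph. -/
def PC (T : SimpleGraph ι) (S : Set ι) : Prop :=
  ∀ ⦃x⦄, x ∈ S → ∀ ⦃y⦄, y ∈ S → ∀ p : T.Walk x y, p.IsPath → ∀ z ∈ p.support, z ∈ S

lemma PC.inter {T : SimpleGraph ι} {A B : Set ι} (hA : PC T A) (hB : PC T B) :
    PC T (A ∩ B) := fun x hx y hy p hp z hz =>
  ⟨hA hx.1 hy.1 p hp z hz, hB hx.2 hy.2 p hp z hz⟩

lemma exists_firstHit {T : SimpleGraph ι} (S : Set ι) :
    ∀ {b a : ι} (q : T.Walk b a), q.IsPath → a ∈ S →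
    ∃ (m : ι) (_ : m ∈ S) (q1 : T.Walk b m), q1.IsPath ∧
      (∀ z ∈ q1.support, z ∈ q.support) ∧ (∀ z ∈ q1.support, z ∈ S → z = m) := by
  intro b a q
  induction q with
  | nil =>
    intro _ ha
    exact ⟨_, ha, Walk.nil, Walk.IsPath.nil, fun z hz => hz, fun z hz _ => by simpa using hz⟩
  | @cons u v w h tail ih =>
    intro hq ha
    by_cases hu : u ∈ S
    · refine ⟨u, hu, Walk.nil, Walk.IsPath.nil, ?_, ?_⟩
      · intro z hz; simp only [Walk.support_nil, List.mem_singleton] at hz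
        subst hz; exact Walk.start_mem_support _
      · intro z hz _; simpa using hz
    · obtain ⟨hp, hns⟩ := (Walk.cons_isPath_iff h tail).mp hq
      obtain ⟨m, hm, q1, hq1, hsub, hmin⟩ := ih hp ha
      refine ⟨m, hm, Walk.cons h q1, ?_, ?_, ?_⟩
      · exact (Walk.cons_isPath_iff h q1).mpr ⟨hq1, fun hc => hns (hsub u hc)⟩
      · intro z hz
        simp only [Walk.support_cons, List.mem_cons] at hz ⊢
        rcases hz with rfl | hz
        · exact Or.inl rfl
        · exact Or.inr (hsub z hz)
      · intro z hz hzS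
        simp only [Walk.support_cons, List.mem_cons] at hz
        rcases hz with rfl | hz
        · exact absurd hzS hu
        · exact hmin z hz hzS

lemma helly3 {T : SimpleGraph ι} (hpre : T.Preconnected) {A B C : Set ι}
    (hA : PC T A) (hB : PC T B) (hC : PC T C) {a b c : ι}
    (haA : a ∈ A) (haB : a ∈ B) (hbB : b ∈ B) (hbC : b ∈ C) (hcA : c ∈ A) (hcC : c ∈ C) :
    ∃ m, m ∈ A ∧ m ∈ B ∧ m ∈ C := by
  classical
  obtain ⟨w⟩ := hpre a c
  set r := w.bypass with hrdef
  have hr : r.IsPath := w.bypass_isPath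
  obtain ⟨w'⟩ := hpre b a
  set q := w'.bypass with hqdef
  have hq : q.IsPath := w'.bypass_isPath
  obtain ⟨m, hm, q1, hq1, hsub, hmin⟩ :=
    exists_firstHit {z | z ∈ r.support} q hq (Walk.start_mem_support r)
  have hmr : m ∈ r.support := hm
  set r2 := r.dropUntil m hmr with hr2def
  have hr2 : r2.IsPath := hr.dropUntil hmr
  have hP : (q1.append r2).IsPath := by
    rw [Walk.isPath_def, Walk.support_append]
    refine List.Nodup.append ((Walk.isPath_def _).mp hq1)
      (((Walk.isPath_def _).mp hr2).sublist (List.tail_sublist _)) ?_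
    intro z hz1 hz2
    have hzr : z ∈ r.support :=
      Walk.support_dropUntil_subset r hmr (List.mem_of_mem_tail hz2)
    have : z = m := hmin z hz1 hzr
    subst this
    have hnd : r2.support.Nodup := (Walk.isPath_def _).mp hr2
    rw [Walk.support_eq_cons r2] at hnd
    exact (List.nodup_cons.mp hnd).1 hz2
  have hmA : m ∈ A := hA haA hcA r hr m hmr
  have hmB : m ∈ B := hB hbB haB q hq m (hsub m (Walk.end_mem_support q1))
  have hmC : m ∈ C := by
    refine hC hbC hcC (q1.append r2) hP m ?_
    rw [Walk.support_append]
    exact List.mem_append.mpr (Or.inl (Walk.end_mem_support q1))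
  exact ⟨m, hmA, hmB, hmC⟩


lemma pc_of_preconnected {T : SimpleGraph ι} (hac : T.IsAcyclic) {S : Set ι}
    (hp : (T.induce S).Preconnected) : PC T S := by
  classical
  intro x hx y hy p hpath z hz
  obtain ⟨w⟩ := hp ⟨x, hx⟩ ⟨y, hy⟩
  have hw : ∀ t ∈ (w.map (Embedding.induce S).toHom).support, t ∈ S := by
    intro t ht
    rw [Walk.support_map] at ht
    obtain ⟨⟨t', ht'⟩, _, rfl⟩ := List.mem_map.mp ht
    exact ht'
  set w' := (w.map (Embedding.induce S).toHom) with hw'def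
  have hb : w'.bypass.IsPath := w'.bypass_isPath
  have : (⟨p, hpath⟩ : T.Path x y) = ⟨w'.bypass, hb⟩ := hac.path_unique _ _
  have hps : p = w'.bypass := congrArg Subtype.val this
  rw [hps] at hz
  exact hw z (w'.support_bypass_subset hz)

lemma hellyFinset {V : Type} {T : SimpleGraph ι} (hpre : T.Preconnected) (s : Finset V) :
    ∀ I : V → Set ι, (∀ v ∈ s, PC T (I v)) →
      (∀ u ∈ s, ∀ v ∈ s, (I u ∩ I v).Nonempty) → s.Nonempty →
      ∃ i, ∀ v ∈ s, i ∈ I v := by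
  classical
  induction s using Finset.induction_on with
  | empty => intro I _ _ hne; exact absurd hne (by simp)
  | @insert a s ha ih =>
    intro I hPC hpair _
    by_cases hs : s.Nonempty
    · obtain ⟨i, hi⟩ := ih (fun v => I v ∩ I a)
        (fun v hv => PC.inter (hPC v (Finset.mem_insert_of_mem hv))
          (hPC a (Finset.mem_insert_self a s)))
        (fun u hu v hv => by
          obtain ⟨x, hx⟩ := hpair u (Finset.mem_insert_of_mem hu) v (Finset.mem_insert_of_mem hv)
          obtain ⟨y, hy⟩ := hpair v (Finset.mem_insert_of_mem hv) a (Finset.mem_insert_self a s)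
          obtain ⟨z, hz⟩ := hpair u (Finset.mem_insert_of_mem hu) a (Finset.mem_insert_self a s)
          obtain ⟨m, hmU, hmV, hmA⟩ := helly3 hpre
            (hPC u (Finset.mem_insert_of_mem hu)) (hPC v (Finset.mem_insert_of_mem hv))
            (hPC a (Finset.mem_insert_self a s)) hx.1 hx.2 hy.1 hy.2 hz.1 hz.2
          exact ⟨m, ⟨hmU, hmA⟩, ⟨hmV, hmA⟩⟩)
        hs
      refine ⟨i, fun v hv => ?_⟩
      rcases Finset.mem_insert.mp hv with rfl | hv
      · obtain ⟨u, hu⟩ := hs; exact (hi u hu).2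
      · exact (hi v hv).1
    · obtain ⟨i, hi, _⟩ := hpair a (Finset.mem_insert_self a s) a (Finset.mem_insert_self a s)
      refine ⟨i, fun v hv => ?_⟩
      rcases Finset.mem_insert.mp hv with rfl | hv
      · exact hi
      · exact absurd ⟨v, hv⟩ hs

lemma clique_in_bag {V : Type} {w : ℕ} (G : SimpleGraph V) (T : SimpleGraph ι) (B : ι → Finset V)
    (hconn : T.Connected) (hac : T.IsAcyclic)
    (hcov : ∀ v, ∃ i, v ∈ B i)
    (hedge : ∀ u v, G.Adj u v → ∃ i, u ∈ B i ∧ v ∈ B i)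
    (hsub : ∀ v, (T.induce {i | v ∈ B i}).Preconnected)
    (hw : ∀ i, (B i).card ≤ w + 1)
    (K : Set V) (hK : G.IsClique K) : ∃ i, ∀ x ∈ K, x ∈ B i := by
  classical
  set I : V → Set ι := fun v => {i | v ∈ B i} with hI
  have hPC : ∀ v, PC T (I v) := fun v => pc_of_preconnected hac (hsub v)
  have hpair : ∀ u ∈ K, ∀ v ∈ K, (I u ∩ I v).Nonempty := by
    intro u hu v hv
    by_cases huv : u = v
    · subst huv; obtain ⟨i, hi⟩ := hcov u; exact ⟨i, hi, hi⟩
    · obtain ⟨i, hi1, hi2⟩ := hedge u v (hK hu hv huv)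
      exact ⟨i, hi1, hi2⟩
  have hfin : K.Finite := by
    by_contra hinf
    obtain ⟨t, hts, htc⟩ := (Set.not_infinite.not_right.mpr hinf : K.Infinite).exists_subset_card_eq (w + 2)
    obtain ⟨i, hi⟩ := hellyFinset hconn.preconnected t I
      (fun v hv => hPC v) (fun u hu v hv => hpair u (hts hu) v (hts hv))
      (Finset.card_pos.mp (by omega))
    have : t ⊆ B i := fun x hx => hi x hx
    have := Finset.card_le_card this
    have := hw i
    omega
  rcases K.eq_empty_or_nonempty with rfl | ⟨k, hk⟩
  · obtain ⟨i⟩ := hconn.nonempty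
    exact ⟨i, fun x hx => absurd hx (Set.notMem_empty x)⟩
  · obtain ⟨i, hi⟩ := hellyFinset hconn.preconnected hfin.toFinset I
      (fun v _ => hPC v)
      (fun u hu v hv => hpair u (hfin.mem_toFinset.mp hu) v (hfin.mem_toFinset.mp hv))
      ⟨k, hfin.mem_toFinset.mpr hk⟩
    exact ⟨i, fun x hx => hi x (hfin.mem_toFinset.mpr hx)⟩


variable {ι₁ ι₂ : Type}

def glue (T₁ : SimpleGraph ι₁) (T₂ : SimpleGraph ι₂) (p : ι₁) (q : ι₂) :
    SimpleGraph (ι₁ ⊕ ι₂) where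
  Adj x y :=
    (∃ a b, x = Sum.inl a ∧ y = Sum.inl b ∧ T₁.Adj a b) ∨
    (∃ a b, x = Sum.inr a ∧ y = Sum.inr b ∧ T₂.Adj a b) ∨
    (x = Sum.inl p ∧ y = Sum.inr q) ∨ (x = Sum.inr q ∧ y = Sum.inl p)
  symm := by
    constructor
    rintro x y (⟨a, b, rfl, rfl, h⟩ | ⟨a, b, rfl, rfl, h⟩ | ⟨rfl, rfl⟩ | ⟨rfl, rfl⟩)
    · exact Or.inl ⟨b, a, rfl, rfl, h.symm⟩
    · exact Or.inr (Or.inl ⟨b, a, rfl, rfl, h.symm⟩)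
    · exact Or.inr (Or.inr (Or.inr ⟨rfl, rfl⟩))
    · exact Or.inr (Or.inr (Or.inl ⟨rfl, rfl⟩))
  loopless := by
    constructor
    rintro x (⟨a, b, rfl, hab, h⟩ | ⟨a, b, rfl, hab, h⟩ | ⟨rfl, h⟩ | ⟨rfl, h⟩)
    · exact T₁.irrefl (Sum.inl_injective hab ▸ h)
    · exact T₂.irrefl (Sum.inr_injective hab ▸ h)
    · exact Sum.inl_ne_inr h
    · exact Sum.inr_ne_inl h

variable {T₁ : SimpleGraph ι₁} {T₂ : SimpleGraph ι₂} {p : ι₁} {q : ι₂}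

lemma glue_adj_inl_inl {a b : ι₁} : (glue T₁ T₂ p q).Adj (Sum.inl a) (Sum.inl b) ↔ T₁.Adj a b := by
  constructor
  · rintro (⟨a', b', ha, hb, h⟩ | ⟨a', b', ha, hb, h⟩ | ⟨ha, hb⟩ | ⟨ha, hb⟩)
    · obtain rfl := Sum.inl_injective ha; obtain rfl := Sum.inl_injective hb; exact h
    · exact absurd ha (by simp)
    · exact absurd hb (by simp)
    · exact absurd ha (by simp)
  · intro h; exact Or.inl ⟨a, b, rfl, rfl, h⟩

lemma glue_adj_inr_inr {a b : ι₂} : (glue T₁ T₂ p q).Adj (Sum.inr a) (Sum.inr b) ↔ T₂.Adj a b := by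
  constructor
  · rintro (⟨a', b', ha, hb, h⟩ | ⟨a', b', ha, hb, h⟩ | ⟨ha, hb⟩ | ⟨ha, hb⟩)
    · exact absurd ha (by simp)
    · obtain rfl := Sum.inr_injective ha; obtain rfl := Sum.inr_injective hb; exact h
    · exact absurd ha (by simp)
    · exact absurd hb (by simp)
  · intro h; exact Or.inr (Or.inl ⟨a, b, rfl, rfl, h⟩)

lemma glue_adj_inl_inr {a : ι₁} {b : ι₂} :
    (glue T₁ T₂ p q).Adj (Sum.inl a) (Sum.inr b) ↔ a = p ∧ b = q := by
  constructor
  · rintro (⟨a', b', ha, hb, h⟩ | ⟨a', b', ha, hb, h⟩ | ⟨ha, hb⟩ | ⟨ha, hb⟩)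
    · exact absurd hb (by simp)
    · exact absurd ha (by simp)
    · exact ⟨Sum.inl_injective ha, Sum.inr_injective hb⟩
    · exact absurd ha (by simp)
  · rintro ⟨rfl, rfl⟩; exact Or.inr (Or.inr (Or.inl ⟨rfl, rfl⟩))

lemma glue_adj_inr_inl {a : ι₂} {b : ι₁} :
    (glue T₁ T₂ p q).Adj (Sum.inr a) (Sum.inl b) ↔ b = p ∧ a = q := by
  rw [adj_comm, glue_adj_inl_inr]

def homL : T₁ →g glue T₁ T₂ p q where
  toFun := Sum.inl
  map_rel' := fun h => glue_adj_inl_inl.mpr h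

def homR : T₂ →g glue T₁ T₂ p q where
  toFun := Sum.inr
  map_rel' := fun h => glue_adj_inr_inr.mpr h

lemma glue_connected (h₁ : T₁.Connected) (h₂ : T₂.Connected) :
    (glue T₁ T₂ p q).Connected := by
  have key : ∀ x : ι₁ ⊕ ι₂, (glue T₁ T₂ p q).Reachable x (Sum.inl p) := by
    rintro (a | b)
    · exact (h₁.preconnected a p).map (homL : T₁ →g glue T₁ T₂ p q)
    · exact ((h₂.preconnected b q).map (homR : T₂ →g glue T₁ T₂ p q)).trans
        (glue_adj_inr_inl.mpr ⟨rfl, rfl⟩).reachable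
  haveI : Nonempty (ι₁ ⊕ ι₂) := ⟨Sum.inl p⟩
  exact ⟨fun x y => (key x).trans (key y).symm⟩


section parity
variable [DecidableEq (Sym2 (ι₁ ⊕ ι₂))]

lemma glue_parity : ∀ {x y : ι₁ ⊕ ι₂} (c : (glue T₁ T₂ p q).Walk x y),
    (Even (c.edges.count s(Sum.inl p, Sum.inr q)) ↔ x.isLeft = y.isLeft) := by
  intro x y c
  induction c with
  | nil => simp
  | @cons u v w h t ih =>
    rw [Walk.edges_cons]
    rcases u with a | a <;> rcases v with b | b
    · rw [List.count_cons_of_ne (by simp [Sym2.eq_iff])]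
      simpa using ih
    · obtain ⟨ha, hb⟩ := glue_adj_inl_inr.mp h
      rw [show (s(Sum.inl a, Sum.inr b) : Sym2 (ι₁ ⊕ ι₂)) = s(Sum.inl p, Sum.inr q) by
        rw [ha, hb]]
      rw [List.count_cons_self, Nat.even_add_one]
      rcases hw : w.isLeft <;> simp_all
    · obtain ⟨hb, ha⟩ := glue_adj_inr_inl.mp h
      rw [show (s(Sum.inr a, Sum.inl b) : Sym2 (ι₁ ⊕ ι₂)) = s(Sum.inl p, Sum.inr q) by
        rw [hb, ha]; exact Sym2.eq_swap]
      rw [List.count_cons_self, Nat.even_add_one]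
      rcases hw : w.isLeft <;> simp_all
    · rw [List.count_cons_of_ne (by simp [Sym2.eq_iff])]
      simpa using ih

lemma glue_cross_not_mem {v : ι₁ ⊕ ι₂} {c : (glue T₁ T₂ p q).Walk v v} (hc : c.IsCycle) :
    s(Sum.inl p, Sum.inr q) ∉ c.edges := by
  intro hmem
  have heven := (glue_parity c).mpr rfl
  rw [List.count_eq_one_of_mem hc.edges_nodup hmem] at heven
  simpa using heven
end parity

lemma glue_same_side : ∀ {x y : ι₁ ⊕ ι₂} (c : (glue T₁ T₂ p q).Walk x y),
    s(Sum.inl p, Sum.inr q) ∉ c.edges → ∀ z ∈ c.support, z.isLeft = x.isLeft := by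
  intro x y c
  induction c with
  | nil => intro _ z hz; simp only [Walk.support_nil, List.mem_singleton] at hz; subst hz; rfl
  | @cons u v w h t ih =>
    intro hnc z hz
    rw [Walk.edges_cons, List.mem_cons] at hnc
    push_neg at hnc
    have huv : v.isLeft = u.isLeft := by
      rcases u with a | a <;> rcases v with b | b
      · rfl
      · obtain ⟨rfl, rfl⟩ := glue_adj_inl_inr.mp h
        exact absurd rfl hnc.1
      · obtain ⟨rfl, rfl⟩ := glue_adj_inr_inl.mp h
        exact absurd Sym2.eq_swap hnc.1
      · rfl
    rw [Walk.support_cons, List.mem_cons] at hz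
    rcases hz with rfl | hz
    · rfl
    · rw [ih hnc.2 z hz, huv]

lemma glue_liftL : ∀ {x y : ι₁ ⊕ ι₂} (c : (glue T₁ T₂ p q).Walk x y),
    (∀ z ∈ c.support, z.isLeft = true) →
    ∃ (a b : ι₁) (_ : x = Sum.inl a) (_ : y = Sum.inl b) (d : T₁.Walk a b),
      c.support = d.support.map Sum.inl ∧ c.edges = d.edges.map (Sym2.map Sum.inl) := by
  intro x y c
  induction c with
  | nil =>
    intro hL
    obtain ⟨a, rfl⟩ := Sum.isLeft_iff.mp (hL _ (Walk.start_mem_support _))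
    exact ⟨a, a, rfl, rfl, Walk.nil, by simp, by simp⟩
  | @cons u v w h t ih =>
    intro hL
    have hL' : ∀ z ∈ t.support, z.isLeft = true := fun z hz =>
      hL z (by rw [Walk.support_cons]; exact List.mem_cons_of_mem _ hz)
    obtain ⟨a', b, rfl, rfl, d, hsupp, hedge⟩ := ih hL'
    obtain ⟨a, rfl⟩ := Sum.isLeft_iff.mp (hL _ (Walk.start_mem_support _))
    refine ⟨a, b, rfl, rfl, Walk.cons (glue_adj_inl_inl.mp h) d, ?_, ?_⟩
    · rw [Walk.support_cons, Walk.support_cons, List.map_cons, hsupp]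
    · rw [Walk.edges_cons, Walk.edges_cons, List.map_cons, hedge, Sym2.map_pair_eq]

lemma isRight_of_isLeft_false : ∀ z : ι₁ ⊕ ι₂, z.isLeft = false → ∃ a, z = Sum.inr a := by
  rintro (a | a) h
  · simp at h
  · exact ⟨a, rfl⟩

lemma glue_liftR : ∀ {x y : ι₁ ⊕ ι₂} (c : (glue T₁ T₂ p q).Walk x y),
    (∀ z ∈ c.support, z.isLeft = false) →
    ∃ (a b : ι₂) (_ : x = Sum.inr a) (_ : y = Sum.inr b) (d : T₂.Walk a b),
      c.support = d.support.map Sum.inr ∧ c.edges = d.edges.map (Sym2.map Sum.inr) := by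
  intro x y c
  induction c with
  | nil =>
    intro hL
    obtain ⟨a, rfl⟩ := isRight_of_isLeft_false _ (hL _ (Walk.start_mem_support _))
    exact ⟨a, a, rfl, rfl, Walk.nil, by simp, by simp⟩
  | @cons u v w h t ih =>
    intro hL
    have hL' : ∀ z ∈ t.support, z.isLeft = false := fun z hz =>
      hL z (by rw [Walk.support_cons]; exact List.mem_cons_of_mem _ hz)
    obtain ⟨a', b, rfl, rfl, d, hsupp, hedge⟩ := ih hL'
    obtain ⟨a, rfl⟩ := isRight_of_isLeft_false _ (hL _ (Walk.start_mem_support _))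
    refine ⟨a, b, rfl, rfl, Walk.cons (glue_adj_inr_inr.mp h) d, ?_, ?_⟩
    · rw [Walk.support_cons, Walk.support_cons, List.map_cons, hsupp]
    · rw [Walk.edges_cons, Walk.edges_cons, List.map_cons, hedge, Sym2.map_pair_eq]

lemma cycle_of_lift {ιa : Type} {Ta : SimpleGraph ιa} {f : ιa → ι₁ ⊕ ι₂}
    (hf : Function.Injective f) {v : ι₁ ⊕ ι₂} {a : ιa}
    {c : (glue T₁ T₂ p q).Walk v v} (hc : c.IsCycle) (d : Ta.Walk a a)
    (hsupp : c.support = d.support.map f) (hedge : c.edges = d.edges.map (Sym2.map f)) :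
    d.IsCycle := by
  refine ⟨⟨⟨?_⟩, ?_⟩, ?_⟩
  · have := hc.edges_nodup
    rw [hedge] at this
    exact this.of_map _
  · intro hdnil
    have h3 := hc.three_le_length
    have : c.length = d.length := by
      rw [← Walk.length_edges, ← Walk.length_edges, hedge, List.length_map]
    rw [this, hdnil] at h3
    simp at h3
  · have h := hc.support_nodup
    rw [hsupp, show (List.map f d.support).tail = d.support.tail.map f from by rw [List.map_tail]] at h
    exact h.of_map _

lemma glue_acyclic (h₁ : T₁.IsAcyclic) (h₂ : T₂.IsAcyclic) : (glue T₁ T₂ p q).IsAcyclic := by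
  classical
  intro v c hc
  have hnc := glue_cross_not_mem hc
  have hside := glue_same_side c hnc
  rcases hv : v with a | a
  · subst hv
    obtain ⟨a', b, ha, hb, d, hsupp, hedge⟩ := glue_liftL c (fun z hz => hside z hz)
    obtain rfl := Sum.inl_injective ha
    obtain rfl := Sum.inl_injective hb
    exact h₁ d (cycle_of_lift Sum.inl_injective hc d hsupp hedge)
  · subst hv
    obtain ⟨a', b, ha, hb, d, hsupp, hedge⟩ := glue_liftR c (fun z hz => hside z hz)
    obtain rfl := Sum.inr_injective ha
    obtain rfl := Sum.inr_injective hb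
    exact h₂ d (cycle_of_lift Sum.inr_injective hc d hsupp hedge)


lemma glue_induce_precon {I₁ : Set ι₁} {I₂ : Set ι₂}
    (h₁ : (T₁.induce I₁).Preconnected) (h₂ : (T₂.induce I₂).Preconnected)
    (A : Set (ι₁ ⊕ ι₂))
    (hAl : ∀ i, Sum.inl i ∈ A ↔ i ∈ I₁) (hAr : ∀ j, Sum.inr j ∈ A ↔ j ∈ I₂)
    (hcases : I₁ = ∅ ∨ I₂ = ∅ ∨ (p ∈ I₁ ∧ q ∈ I₂)) :
    (((glue T₁ T₂ p q)).induce A).Preconnected := by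
  let fL : T₁.induce I₁ →g (glue T₁ T₂ p q).induce A :=
    ⟨fun x => ⟨Sum.inl x.1, (hAl _).2 x.2⟩, fun hab => glue_adj_inl_inl.mpr hab⟩
  let fR : T₂.induce I₂ →g (glue T₁ T₂ p q).induce A :=
    ⟨fun x => ⟨Sum.inr x.1, (hAr _).2 x.2⟩, fun hab => glue_adj_inr_inr.mpr hab⟩
  have reachL : ∀ (i j : ι₁) (hi : i ∈ I₁) (hj : j ∈ I₁),
      ((glue T₁ T₂ p q).induce A).Reachable ⟨Sum.inl i, (hAl i).2 hi⟩ ⟨Sum.inl j, (hAl j).2 hj⟩ :=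
    fun i j hi hj => (h₁ ⟨i, hi⟩ ⟨j, hj⟩).map fL
  have reachR : ∀ (i j : ι₂) (hi : i ∈ I₂) (hj : j ∈ I₂),
      ((glue T₁ T₂ p q).induce A).Reachable ⟨Sum.inr i, (hAr i).2 hi⟩ ⟨Sum.inr j, (hAr j).2 hj⟩ :=
    fun i j hi hj => (h₂ ⟨i, hi⟩ ⟨j, hj⟩).map fR
  have bridge : ∀ (hp : p ∈ I₁) (hq : q ∈ I₂),
      ((glue T₁ T₂ p q).induce A).Reachable ⟨Sum.inl p, (hAl p).2 hp⟩ ⟨Sum.inr q, (hAr q).2 hq⟩ :=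
    fun hp hq => (Adj.reachable (by exact glue_adj_inl_inr.mpr ⟨rfl, rfl⟩ :
      ((glue T₁ T₂ p q).induce A).Adj ⟨Sum.inl p, (hAl p).2 hp⟩ ⟨Sum.inr q, (hAr q).2 hq⟩))
  rintro ⟨(i | j), hx⟩ ⟨(i' | j'), hy⟩
  · exact reachL i i' ((hAl i).1 hx) ((hAl i').1 hy)
  · have hi := (hAl i).1 hx
    have hj := (hAr j').1 hy
    rcases hcases with hI | hI | ⟨hp, hq⟩
    · exact absurd (hI ▸ hi) (Set.notMem_empty i)
    · exact absurd (hI ▸ hj) (Set.notMem_empty j')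
    · exact ((reachL i p hi hp).trans (bridge hp hq)).trans (reachR q j' hq hj)
  · have hj := (hAr j).1 hx
    have hi := (hAl i').1 hy
    rcases hcases with hI | hI | ⟨hp, hq⟩
    · exact absurd (hI ▸ hi) (Set.notMem_empty i')
    · exact absurd (hI ▸ hj) (Set.notMem_empty j)
    · exact ((reachR j q hj hq).trans (bridge hp hq).symm).trans (reachL p i' hp hi)
  · exact reachR j j' ((hAr j).1 hx) ((hAr j').1 hy)

lemma induce_empty_precon {ι : Type} (T : SimpleGraph ι) : (T.induce (∅ : Set ι)).Preconnected :=
  fun x => absurd x.2 (Set.notMem_empty _)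


end CliqueSumAux

/-- If `G` is a clique-sum of `G₁` and `G₂` then `tw(G) ≤ max (tw G₁) (tw G₂)`. -/


theorem stmt3 {V : Type} (G G₁ G₂ G₁' G₂' : SimpleGraph V) (S₁ S₂ : Set V)
    (hcover : S₁ ∪ S₂ = Set.univ)
    (hG₁ : ∀ u v : V, G₁.Adj u v → u ∈ S₁ ∧ v ∈ S₁)
    (hG₂ : ∀ u v : V, G₂.Adj u v → u ∈ S₂ ∧ v ∈ S₂)
    (h1 : G₁' ≤ G₁) (h2 : G₂' ≤ G₂)
    (hG : G = G₁' ⊔ G₂')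
    (hclique₁ : G₁.IsClique (S₁ ∩ S₂)) (hclique₂ : G₂.IsClique (S₁ ∩ S₂)) :
    ∀ w : ℕ, HasTreewidthLE G₁ w → HasTreewidthLE G₂ w → HasTreewidthLE G w := by
  classical
  intro w hT1 hT2
  obtain ⟨ι₁, T₁, B₁, hc₁, ha₁, hcov₁, hedge₁, hsub₁, hcard₁⟩ := hT1
  obtain ⟨ι₂, T₂, B₂, hc₂, ha₂, hcov₂, hedge₂, hsub₂, hcard₂⟩ := hT2
  obtain ⟨p, hp⟩ := CliqueSumAux.clique_in_bag G₁ T₁ B₁ hc₁ ha₁ hcov₁ hedge₁ hsub₁ hcard₁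
    (S₁ ∩ S₂) hclique₁
  obtain ⟨q, hq⟩ := CliqueSumAux.clique_in_bag G₂ T₂ B₂ hc₂ ha₂ hcov₂ hedge₂ hsub₂ hcard₂
    (S₁ ∩ S₂) hclique₂
  refine ⟨ι₁ ⊕ ι₂, CliqueSumAux.glue T₁ T₂ p q,
    Sum.elim (fun i => (B₁ i).filter (· ∈ S₁)) (fun j => (B₂ j).filter (· ∈ S₂)),
    CliqueSumAux.glue_connected hc₁ hc₂, CliqueSumAux.glue_acyclic ha₁ ha₂, ?_, ?_, ?_, ?_⟩
  · -- cover
    intro v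
    have hv : v ∈ S₁ ∪ S₂ := hcover ▸ Set.mem_univ v
    rcases hv with hv | hv
    · obtain ⟨i, hi⟩ := hcov₁ v
      exact ⟨Sum.inl i, by simpa using Finset.mem_filter.mpr ⟨hi, hv⟩⟩
    · obtain ⟨j, hj⟩ := hcov₂ v
      exact ⟨Sum.inr j, by simpa using Finset.mem_filter.mpr ⟨hj, hv⟩⟩
  · -- edges
    intro u v huv
    rw [hG, SimpleGraph.sup_adj] at huv
    rcases huv with huv | huv
    · have hadj : G₁.Adj u v := h1 huv
      obtain ⟨i, hiu, hiv⟩ := hedge₁ u v hadj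
      obtain ⟨hu, hv⟩ := hG₁ u v hadj
      exact ⟨Sum.inl i, by simpa using Finset.mem_filter.mpr ⟨hiu, hu⟩,
        by simpa using Finset.mem_filter.mpr ⟨hiv, hv⟩⟩
    · have hadj : G₂.Adj u v := h2 huv
      obtain ⟨j, hju, hjv⟩ := hedge₂ u v hadj
      obtain ⟨hu, hv⟩ := hG₂ u v hadj
      exact ⟨Sum.inr j, by simpa using Finset.mem_filter.mpr ⟨hju, hu⟩,
        by simpa using Finset.mem_filter.mpr ⟨hjv, hv⟩⟩
  · -- connectivity
    intro v
    by_cases hv1 : v ∈ S₁ <;> by_cases hv2 : v ∈ S₂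
    · refine CliqueSumAux.glue_induce_precon (hsub₁ v) (hsub₂ v) _ ?_ ?_
        (Or.inr (Or.inr ⟨hp v ⟨hv1, hv2⟩, hq v ⟨hv1, hv2⟩⟩))
      · intro i; simp [Finset.mem_filter, hv1]
      · intro j; simp [Finset.mem_filter, hv2]
    · refine CliqueSumAux.glue_induce_precon (hsub₁ v)
        (CliqueSumAux.induce_empty_precon T₂) _ ?_ ?_ (Or.inr (Or.inl rfl))
      · intro i; simp [Finset.mem_filter, hv1]
      · intro j; simp [Finset.mem_filter, hv2]
    · refine CliqueSumAux.glue_induce_precon (CliqueSumAux.induce_empty_precon T₁)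
        (hsub₂ v) _ ?_ ?_ (Or.inl rfl)
      · intro i; simp [Finset.mem_filter, hv1]
      · intro j; simp [Finset.mem_filter, hv2]
    · refine CliqueSumAux.glue_induce_precon (CliqueSumAux.induce_empty_precon T₁)
        (CliqueSumAux.induce_empty_precon T₂) _ ?_ ?_ (Or.inl rfl)
      · intro i; simp [Finset.mem_filter, hv1]
      · intro j; simp [Finset.mem_filter, hv2]
  · -- cards
    rintro (i | j)
    · exact le_trans (by simpa using Finset.card_filter_le (B₁ i) (· ∈ S₁)) (hcard₁ i)
    · exact le_trans (by simpa using Finset.card_filter_le (B₂ j) (· ∈ S₂)) (hcard₂ j)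
end

section
/- Every graph G has an acyclic orientation in which every vertex has in-degree at most 2∇₀(G), where ∇₀(G) is the maximum of |E(G')|/|V(G')| over all subgraphs G' of G. -/
open Set

/-- `∇₀(G)`: the maximum of `|E(G')|/|V(G')|` over all nonempty subgraphs `G'` of `G`. -/
noncomputable def nabla0 {V : Type} [Fintype V] (G : SimpleGraph V) : ℝ :=
  sSup {x : ℝ | ∃ H : G.Subgraph, H.verts.Nonempty ∧
    x = (H.edgeSet.ncard : ℝ) / (H.verts.ncard : ℝ)}

open scoped Classical

private lemma nabla_bdd {V : Type} [Fintype V] (G : SimpleGraph V) :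
    BddAbove {x : ℝ | ∃ H : G.Subgraph, H.verts.Nonempty ∧
      x = (H.edgeSet.ncard : ℝ) / (H.verts.ncard : ℝ)} := by
  refine ⟨(G.edgeSet.ncard : ℝ), ?_⟩
  rintro x ⟨H, hne, rfl⟩
  have h1 : H.edgeSet.ncard ≤ G.edgeSet.ncard :=
    Set.ncard_le_ncard H.edgeSet_subset (Set.toFinite _)
  have h2 : 1 ≤ H.verts.ncard := (Set.ncard_pos (Set.toFinite _)).2 hne
  calc (H.edgeSet.ncard : ℝ) / (H.verts.ncard : ℝ)
      ≤ (H.edgeSet.ncard : ℝ) := by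
        apply div_le_self (by positivity) (by exact_mod_cast h2)
    _ ≤ (G.edgeSet.ncard : ℝ) := by exact_mod_cast h1

private lemma mindeg {V : Type} [Fintype V] (G : SimpleGraph V) (s : Finset V)
    (hs : s.Nonempty) :
    ∃ v ∈ s, ((s.filter (fun u => G.Adj u v)).card : ℝ) ≤ 2 * nabla0 G := by
  set H : G.Subgraph := (⊤ : G.Subgraph).induce ↑s with hH
  haveI : Fintype ↥H.verts := Fintype.ofFinite _
  haveI : Nonempty ↥H.verts := ⟨⟨hs.choose, hs.choose_spec⟩⟩
  have hdeg : ∀ v : ↥H.verts, H.coe.degree v = (s.filter (fun u => G.Adj u ↑v)).card := by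
    intro v
    rw [SimpleGraph.degree]
    refine Finset.card_bij (fun (a : ↥H.verts) _ => (a : V)) ?_ ?_ ?_
    · intro a ha
      rw [SimpleGraph.mem_neighborFinset] at ha
      have h2 : G.Adj ↑v ↑a := by
        simp [H, SimpleGraph.Subgraph.induce_adj] at ha; exact ha.2.2
      exact Finset.mem_filter.2 ⟨Finset.mem_coe.1 a.2, h2.symm⟩
    · intro a _ b _ h; exact Subtype.ext h
    · intro u hu
      rw [Finset.mem_filter] at hu
      refine ⟨⟨u, Finset.mem_coe.2 hu.1⟩, ?_, rfl⟩
      rw [SimpleGraph.mem_neighborFinset]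
      show H.Adj ↑v u
      simp [H, SimpleGraph.Subgraph.induce_adj, Finset.mem_coe.1 v.2, hu.1, hu.2.symm]
  have hE : H.coe.edgeFinset.card = H.edgeSet.ncard := by
    rw [← Set.ncard_coe_finset, SimpleGraph.coe_edgeFinset]
    rw [← H.image_coe_edgeSet_coe,
      Set.ncard_image_of_injective _ (Sym2.map.injective Subtype.val_injective)]
  have hsum : ∑ v : ↥H.verts, H.coe.degree v = 2 * H.coe.edgeFinset.card := by
    have h := SimpleGraph.sum_degrees_eq_twice_card_edges H.coe
    rw [← h]
    exact Finset.sum_congr rfl fun v _ => by congr!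
  obtain ⟨v0, -, hv0⟩ := Finset.exists_min_image Finset.univ (fun v => H.coe.degree v)
    Finset.univ_nonempty
  have hcardle : (Finset.univ : Finset ↥H.verts).card * H.coe.degree v0 ≤ ∑ v, H.coe.degree v := by
    calc (Finset.univ : Finset ↥H.verts).card * H.coe.degree v0
        = ∑ _v : ↥H.verts, H.coe.degree v0 := by
          rw [Finset.sum_const, smul_eq_mul, Finset.card_univ]
      _ ≤ ∑ v, H.coe.degree v := Finset.sum_le_sum (fun i _ => hv0 i (Finset.mem_univ i))
  have hcard : Fintype.card ↥H.verts = s.card := by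
    simp [H, SimpleGraph.Subgraph.induce_verts, Nat.card_coe_set_eq, Set.ncard_coe_finset]
  have hvcard : H.verts.ncard = s.card := by
    show (↑s : Set V).ncard = s.card
    exact Set.ncard_coe_finset s
  have hEnabla : (H.edgeSet.ncard : ℝ) / (s.card : ℝ) ≤ nabla0 G := by
    rw [← hvcard]
    exact le_csSup (nabla_bdd G) ⟨H, ⟨hs.choose, hs.choose_spec⟩, rfl⟩
  have hspos : 0 < (s.card : ℝ) := by exact_mod_cast hs.card_pos
  refine ⟨↑v0, Finset.mem_coe.1 v0.2, ?_⟩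
  rw [← hdeg v0]
  have key : (s.card : ℝ) * H.coe.degree v0 ≤ (s.card : ℝ) * (2 * nabla0 G) := by
    calc (s.card : ℝ) * H.coe.degree v0
        ≤ ((∑ v, H.coe.degree v : ℕ) : ℝ) := by
          rw [Finset.card_univ, hcard] at hcardle; exact_mod_cast hcardle
      _ = 2 * (H.edgeSet.ncard : ℝ) := by rw [hsum]; push_cast [hE]; ring
      _ ≤ 2 * (nabla0 G * s.card) := by
          have := (div_le_iff₀ hspos).1 hEnabla
          linarith
      _ = (s.card : ℝ) * (2 * nabla0 G) := by ring
  exact le_of_mul_le_mul_left key hspos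

private lemma nabla_nonneg {V : Type} [Fintype V] (G : SimpleGraph V) : 0 ≤ nabla0 G := by
  apply Real.sSup_nonneg
  rintro x ⟨H, -, rfl⟩
  positivity

private lemma enum {V : Type} [Fintype V] (G : SimpleGraph V) (d : ℕ)
    (hd : ∀ s : Finset V, s.Nonempty → ∃ v ∈ s, (s.filter (fun u => G.Adj u v)).card ≤ d) :
    ∀ s : Finset V, ∃ f : V → ℕ, Set.InjOn f ↑s ∧
      ∀ v ∈ s, (s.filter (fun u => G.Adj u v ∧ f u < f v)).card ≤ d := by
  intro s
  induction s using Finset.strongInduction with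
  | _ s ih =>
    rcases s.eq_empty_or_nonempty with rfl | hs
    · exact ⟨fun _ => 0, by simp, by simp⟩
    · obtain ⟨v, hv, hvdeg⟩ := hd s hs
      obtain ⟨f, hinj, hbound⟩ := ih (s.erase v) (Finset.erase_ssubset hv)
      set M := (s.erase v).sup f with hM
      refine ⟨fun u => if u = v then M + 1 else f u, ?_, ?_⟩
      · intro a ha b hb hab
        simp only at hab
        by_cases hav : a = v <;> by_cases hbv : b = v
        · rw [hav, hbv]
        · exfalso; rw [if_pos hav, if_neg hbv] at hab
          have : f b ≤ M := Finset.le_sup (Finset.mem_erase.2 ⟨hbv, Finset.mem_coe.1 hb⟩)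
          omega
        · exfalso; rw [if_neg hav, if_pos hbv] at hab
          have : f a ≤ M := Finset.le_sup (Finset.mem_erase.2 ⟨hav, Finset.mem_coe.1 ha⟩)
          omega
        · rw [if_neg hav, if_neg hbv] at hab
          exact hinj (Finset.mem_coe.2 (Finset.mem_erase.2 ⟨hav, Finset.mem_coe.1 ha⟩))
            (Finset.mem_coe.2 (Finset.mem_erase.2 ⟨hbv, Finset.mem_coe.1 hb⟩)) hab
      · intro u hu
        by_cases huv : u = v
        · subst huv
          refine le_trans (Finset.card_le_card ?_) hvdeg
          intro w hw
          rw [Finset.mem_filter] at hw ⊢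
          exact ⟨hw.1, hw.2.1⟩
        · refine le_trans (Finset.card_le_card ?_) (hbound u (Finset.mem_erase.2 ⟨huv, hu⟩))
          intro w hw
          rw [Finset.mem_filter] at hw ⊢
          obtain ⟨hws, hadj, hlt⟩ := hw
          simp only at hlt
          rw [if_neg huv] at hlt
          have hwv : w ≠ v := by
            intro h; subst h
            rw [if_pos rfl] at hlt
            have : f u ≤ M := Finset.le_sup (Finset.mem_erase.2 ⟨huv, hu⟩)
            omega
          rw [if_neg hwv] at hlt
          exact ⟨Finset.mem_erase.2 ⟨hwv, hws⟩, hadj, hlt⟩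

/-- Every graph has an acyclic orientation with in-degrees at most `2∇₀(G)`. -/
theorem stmt13 {V : Type} [Fintype V] (G : SimpleGraph V) :
    ∃ o : V → V → Prop,
      (∀ u v : V, G.Adj u v ↔ (o u v ∨ o v u)) ∧
      (∀ u v : V, o u v → ¬ o v u) ∧
      (¬ ∃ v : V, Relation.TransGen o v v) ∧
      (∀ v : V, ({u : V | o u v}.ncard : ℝ) ≤ 2 * nabla0 G) := by
  classical
  set d := ⌊2 * nabla0 G⌋₊ with hd
  have hmin : ∀ s : Finset V, s.Nonempty → ∃ v ∈ s,
      (s.filter (fun u => G.Adj u v)).card ≤ d := by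
    intro s hs
    obtain ⟨v, hv, hle⟩ := mindeg G s hs
    exact ⟨v, hv, Nat.le_floor hle⟩
  obtain ⟨f, hinj, hbound⟩ := enum G d hmin Finset.univ
  refine ⟨fun u v => G.Adj u v ∧ f u < f v, ?_, ?_, ?_, ?_⟩
  · intro u v
    constructor
    · intro h
      rcases lt_or_gt_of_ne (fun he => h.ne (hinj (by simp) (by simp) he)) with h' | h'
      · exact Or.inl ⟨h, h'⟩
      · exact Or.inr ⟨h.symm, h'⟩
    · rintro (⟨h, -⟩ | ⟨h, -⟩)
      · exact h
      · exact h.symm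
  · rintro u v ⟨-, h⟩ ⟨-, h'⟩; omega
  · rintro ⟨v, hv⟩
    have mono : ∀ a b, Relation.TransGen (fun u v => G.Adj u v ∧ f u < f v) a b →
        f a < f b := by
      intro a b h
      induction h with
      | single h => exact h.2
      | tail _ h ih => exact ih.trans h.2
    exact lt_irrefl _ (mono v v hv)
  · intro v
    have hset : {u : V | G.Adj u v ∧ f u < f v} =
        ↑(Finset.univ.filter (fun u => G.Adj u v ∧ f u < f v)) := by
      ext u; simp
    rw [hset, Set.ncard_coe_finset]
    calc ((Finset.univ.filter (fun u => G.Adj u v ∧ f u < f v)).card : ℝ)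
        ≤ (d : ℝ) := by exact_mod_cast hbound v (Finset.mem_univ v)
      _ ≤ 2 * nabla0 G := Nat.floor_le (by have := nabla_nonneg G; linarith)
end

section
/- For every a ≥ 1, the graph H_a that is the disjoint union of a stars, each with a leaves, has the following property with S = V(H_a): for every r ≥ 0 and every set X ⊆ V(H_a) with |X| = r, any subset of S that is 2-scattered in H_a − X has size at most ra + (a − r), which is O(√|S|) for fixed r. -/
open Set

/-- `Q` is `d`-scattered in `H - X`: any walk between distinct vertices of `Q` avoiding `X`
has length greater than `d`. -/
def ScatteredIn {V : Type} (H : SimpleGraph V) (d : ℕ) (X : Set V) (Q : Set V) : Prop :=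
  ∀ ⦃u⦄, u ∈ Q → ∀ ⦃v⦄, v ∈ Q → u ≠ v →
    ∀ p : H.Walk u v, (∀ w ∈ p.support, w ∉ X) → d < p.length

/-- The disjoint union of `a` stars, each with `a` leaves: `(i, none)` is the center of the
`i`-th star and `(i, some j)` its `j`-th leaf. -/
def starUnion (a : ℕ) : SimpleGraph (Fin a × Option (Fin a)) where
  Adj p q := p.1 = q.1 ∧ ((p.2 = none ∧ q.2 ≠ none) ∨ (p.2 ≠ none ∧ q.2 = none))
  symm := ⟨by intro p q h; exact ⟨h.1.symm, by tauto⟩⟩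
  loopless := ⟨by intro p h; tauto⟩

/-- In `H_a`, after removing any set `X` of `r` vertices, every 2-scattered set disjoint
from `X` has at most `ra + (a - r)` vertices. -/
theorem stmt15 (a r : ℕ) (ha : 1 ≤ a)
    (X : Finset (Fin a × Option (Fin a))) (hX : X.card = r)
    (Q : Finset (Fin a × Option (Fin a))) (hQX : Disjoint Q X)
    (hscat : ScatteredIn (starUnion a) 2 ↑X ↑Q) :
    Q.card ≤ r * a + (a - r) := by
  classical
  have hcard : Q.card = ∑ i : Fin a, (Q.filter fun p => p.1 = i).card :=
    Finset.card_eq_sum_card_fiberwise (fun p _ => Finset.mem_univ _)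
  -- fiber bounds
  have hfib : ∀ i : Fin a, (Q.filter fun p => p.1 = i).card ≤
      if ((i, (none : Option (Fin a))) ∈ X) then a else 1 := by
    intro i
    by_cases hc : ((i, (none : Option (Fin a))) ∈ X)
    · simp only [hc, if_true]
      have hsub : (Q.filter fun p => p.1 = i) ⊆
          Finset.univ.image (fun j : Fin a => ((i, some j) : Fin a × Option (Fin a))) := by
        intro p hp
        simp only [Finset.mem_filter] at hp
        obtain ⟨hpQ, hpi⟩ := hp
        match hp2 : p.2 with
        | none =>
          exfalso
          have : p = (i, none) := Prod.ext hpi hp2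
          exact (Finset.disjoint_left.mp hQX hpQ) (this ▸ hc)
        | some j =>
          simp only [Finset.mem_image]
          exact ⟨j, Finset.mem_univ _, (Prod.ext hpi hp2).symm⟩
      calc (Q.filter fun p => p.1 = i).card
          ≤ (Finset.univ.image (fun j : Fin a => ((i, some j) : Fin a × Option (Fin a)))).card :=
            Finset.card_le_card hsub
        _ ≤ (Finset.univ : Finset (Fin a)).card := Finset.card_image_le
        _ = a := by simp
    · simp only [hc, if_false]
      refine Finset.card_le_one.mpr ?_
      intro u hu v hv
      by_contra hne
      simp only [Finset.mem_filter] at hu hv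
      obtain ⟨huQ, hui⟩ := hu
      obtain ⟨hvQ, hvi⟩ := hv
      have hnotX : ∀ w ∈ Q, w ∉ (X : Set _) := fun w hw =>
        Finset.disjoint_left.mp hQX hw
      match hu2 : u.2, hv2 : v.2 with
      | none, none => exact hne (Prod.ext (hui.trans hvi.symm) (hu2.trans hv2.symm))
      | none, some j =>
        have hadj : (starUnion a).Adj u v :=
          ⟨hui.trans hvi.symm, Or.inl ⟨hu2, by simp [hv2]⟩⟩
        have := hscat huQ hvQ hne (SimpleGraph.Walk.cons hadj SimpleGraph.Walk.nil)
          (by intro w hw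
              simp only [SimpleGraph.Walk.support_cons, SimpleGraph.Walk.support_nil,
                List.mem_cons, List.mem_singleton] at hw
              rcases hw with rfl | hw
              · exact hnotX _ huQ
              · simp at hw; exact hw ▸ hnotX v hvQ)
        simp [SimpleGraph.Walk.length_cons] at this
      | some j, none =>
        have hadj : (starUnion a).Adj u v :=
          ⟨hui.trans hvi.symm, Or.inr ⟨by simp [hu2], hv2⟩⟩
        have := hscat huQ hvQ hne (SimpleGraph.Walk.cons hadj SimpleGraph.Walk.nil)
          (by intro w hw
              simp only [SimpleGraph.Walk.support_cons, SimpleGraph.Walk.support_nil,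
                List.mem_cons, List.mem_singleton] at hw
              rcases hw with rfl | hw
              · exact hnotX _ huQ
              · simp at hw; exact hw ▸ hnotX v hvQ)
        simp [SimpleGraph.Walk.length_cons] at this
      | some j, some j' =>
        have hadj1 : (starUnion a).Adj u (i, none) := ⟨hui, Or.inr ⟨by simp [hu2], rfl⟩⟩
        have hadj2 : (starUnion a).Adj (i, none) v := ⟨hvi.symm, Or.inl ⟨rfl, by simp [hv2]⟩⟩
        have := hscat huQ hvQ hne
          (SimpleGraph.Walk.cons hadj1 (SimpleGraph.Walk.cons hadj2 SimpleGraph.Walk.nil))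
          (by intro w hw
              simp only [SimpleGraph.Walk.support_cons, SimpleGraph.Walk.support_nil,
                List.mem_cons, List.mem_singleton] at hw
              rcases hw with rfl | rfl | hw
              · exact hnotX _ huQ
              · exact fun h => hc h
              · simp at hw; exact hw ▸ hnotX v hvQ)
        simp [SimpleGraph.Walk.length_cons] at this
  -- counting
  set C : Finset (Fin a) := Finset.univ.filter
    (fun i => ((i, (none : Option (Fin a))) ∈ X)) with hC
  have hkr : C.card ≤ r := by
    rw [← hX]
    apply Finset.card_le_card_of_injOn (fun i => ((i, none) : Fin a × Option (Fin a)))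
    · intro i hi; exact (Finset.mem_filter.mp (Finset.mem_coe.mp hi)).2
    · intro i _ j _ h; exact (Prod.mk.injEq _ _ _ _ ▸ h).1
  have hsplit : C.card + (Finset.univ.filter
      (fun i => ¬ ((i, (none : Option (Fin a))) ∈ X))).card = a := by
    rw [hC, Finset.card_filter_add_card_filter_not]
    simp
  set n := (Finset.univ.filter
      (fun i => ¬ ((i, (none : Option (Fin a))) ∈ X))).card with hn
  have hsum : Q.card ≤ C.card * a + n := by
    rw [hcard]
    calc ∑ i : Fin a, (Q.filter fun p => p.1 = i).card
        ≤ ∑ i : Fin a, (if ((i, (none : Option (Fin a))) ∈ X) then a else 1) :=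
          Finset.sum_le_sum (fun i _ => hfib i)
      _ = C.card * a + n := by
          rw [Finset.sum_ite, Finset.sum_const, Finset.sum_const]
          simp [hC, hn, mul_comm]
  refine hsum.trans ?_
  rcases le_or_gt r a with hra | hra
  · have h1 : C.card ≤ a := le_trans hkr hra
    zify [hra, hkr]
    have h2 : (C.card : ℤ) + n = a := by exact_mod_cast hsplit
    nlinarith [mul_le_mul_of_nonneg_right (by exact_mod_cast hkr : (C.card : ℤ) ≤ r)
      (by positivity : (0:ℤ) ≤ 1), sq_nonneg ((a:ℤ) - C.card)]
  · have hra' : a - r = 0 := Nat.sub_eq_zero_of_le hra.le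
    rw [hra', add_zero]
    have hca : C.card ≤ a := by omega
    have : C.card * a + n ≤ a * a := by nlinarith
    calc C.card * a + n ≤ a * a := this
      _ ≤ r * a := Nat.mul_le_mul_right a hra.le
end
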